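/- arXiv:2110.02499 — 5 statements merged into one kernel-verified Lean document; each statement's English description precedes it below -/
import Mathlib

section
/- For every bounded linear operator A on a complex Hilbert space, (1/4)‖A*A + AA*‖ ≤ (1/4)‖Re(A) + Im(A)‖² + (1/4)‖Re(A) − Im(A)‖² ≤ (1/4)‖Re(A) + Im(A)‖² + (1/4)‖Re(A) − Im(A)‖² + (1/4)c²(Re(A) + Im(A)) + (1/4)c²(Re(A) − Im(A)) ≤ w²(A). -/
open scoped InnerProductSpace
open ContinuousLinearMap

/-- The numerical radius of a bounded linear operator. -/
noncomputable def numRadius {H : Type*} [NormedAddCommGroup H] [InnerProductSpace ℂ H]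
    (A : H →L[ℂ] H) : ℝ :=
  sSup {r : ℝ | ∃ x : H, ‖x‖ = 1 ∧ r = ‖⟪A x, x⟫_ℂ‖}

/-- The Crawford number of a bounded linear operator. -/
noncomputable def crawford {H : Type*} [NormedAddCommGroup H] [InnerProductSpace ℂ H]
    (A : H →L[ℂ] H) : ℝ :=
  sInf {r : ℝ | ∃ x : H, ‖x‖ = 1 ∧ r = ‖⟪A x, x⟫_ℂ‖}

/-- The real part of a bounded linear operator. -/
noncomputable def reP {H : Type*} [NormedAddCommGroup H] [InnerProductSpace ℂ H]
    [CompleteSpace H] (A : H →L[ℂ] H) : H →L[ℂ] H :=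
  ((2 : ℂ)⁻¹) • (A + adjoint A)

/-- The imaginary part of a bounded linear operator. -/
noncomputable def imP {H : Type*} [NormedAddCommGroup H] [InnerProductSpace ℂ H]
    [CompleteSpace H] (A : H →L[ℂ] H) : H →L[ℂ] H :=
  ((2 * Complex.I)⁻¹) • (A - adjoint A)

section Aux

variable {H : Type*} [NormedAddCommGroup H] [InnerProductSpace ℂ H]

lemma numSet_bddAbove (A : H →L[ℂ] H) :
    BddAbove {r : ℝ | ∃ x : H, ‖x‖ = 1 ∧ r = ‖⟪A x, x⟫_ℂ‖} := by
  refine ⟨‖A‖, ?_⟩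
  rintro r ⟨x, hx, rfl⟩
  calc ‖⟪A x, x⟫_ℂ‖ ≤ ‖A x‖ * ‖x‖ := norm_inner_le_norm _ _
    _ ≤ ‖A‖ * ‖x‖ * ‖x‖ := by
        have := A.le_opNorm x
        nlinarith [norm_nonneg x]
    _ = ‖A‖ := by rw [hx]; ring

lemma le_numRadius (A : H →L[ℂ] H) {x : H} (hx : ‖x‖ = 1) :
    ‖⟪A x, x⟫_ℂ‖ ≤ numRadius A :=
  le_csSup (numSet_bddAbove A) ⟨x, hx, rfl⟩

lemma crawford_le (A : H →L[ℂ] H) {x : H} (hx : ‖x‖ = 1) :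
    crawford A ≤ ‖⟪A x, x⟫_ℂ‖ := by
  refine csInf_le ⟨0, ?_⟩ ⟨x, hx, rfl⟩
  rintro r ⟨y, hy, rfl⟩
  positivity

lemma crawford_nonneg [Nontrivial H] (A : H →L[ℂ] H) : 0 ≤ crawford A := by
  obtain ⟨x₀, hx₀⟩ := exists_norm_eq H (zero_le_one)
  refine le_csInf ⟨_, x₀, hx₀, rfl⟩ ?_
  rintro r ⟨y, hy, rfl⟩
  positivity

/-- norm of a self-adjoint operator is bounded by a bound on the numerical range. -/
lemma norm_le_of_selfAdjoint [CompleteSpace H] {B : H →L[ℂ] H} (hB : IsSelfAdjoint B)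
    {M : ℝ} (hM : 0 ≤ M) (h : ∀ x : H, ‖x‖ = 1 → ‖⟪B x, x⟫_ℂ‖ ≤ M) : ‖B‖ ≤ M := by
  have hsym := hB.isSymmetric
  have h' : ∀ x : H, ‖⟪B x, x⟫_ℂ‖ ≤ M * ‖x‖ ^ 2 := by
    intro x
    rcases eq_or_ne x 0 with rfl | hx
    · simp
    · have hn : ‖x‖ ≠ 0 := norm_ne_zero_iff.mpr hx
      have hu : ‖(‖x‖⁻¹ : ℝ) • x‖ = 1 := by
        rw [norm_smul]; simp [hn]
      have key := h _ hu
      rw [RCLike.real_smul_eq_coe_smul (K := ℂ), map_smul, inner_smul_left,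
        inner_smul_right, RCLike.conj_ofReal, ← mul_assoc, norm_mul,
        norm_mul] at key
      simp only [RCLike.norm_ofReal, Real.norm_eq_abs] at key
      rw [abs_of_nonneg (by positivity)] at key
      have hnn : (0:ℝ) < ‖x‖ := norm_pos_iff.mpr hx
      have hx2 : ‖x‖⁻¹ * ‖x‖ = 1 := inv_mul_cancel₀ hn
      have hid : ‖x‖⁻¹ * ‖x‖⁻¹ * ‖⟪B x, x⟫_ℂ‖ * ‖x‖ ^ 2
          = ‖⟪B x, x⟫_ℂ‖ * ((‖x‖⁻¹ * ‖x‖) * (‖x‖⁻¹ * ‖x‖)) := by ring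
      rw [hx2, one_mul, mul_one] at hid
      have := mul_le_mul_of_nonneg_right key (sq_nonneg ‖x‖)
      linarith
  refine B.opNorm_le_bound hM fun x => ?_
  rcases eq_or_ne (B x) 0 with h0 | h0
  · rw [h0]; simp; positivity
  have hxne : x ≠ 0 := by rintro rfl; simp at h0
  have hBn : (0:ℝ) < ‖B x‖ := norm_pos_iff.mpr h0
  have hxn : (0:ℝ) < ‖x‖ := norm_pos_iff.mpr hxne
  set y : H := ((‖x‖ / ‖B x‖ : ℝ) : ℂ) • B x with hy
  have hyn : ‖y‖ = ‖x‖ := by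
    rw [hy, norm_smul]
    simp only [Complex.norm_real, Real.norm_eq_abs]
    rw [abs_of_nonneg (le_of_lt (div_pos hxn hBn))]
    field_simp
  have e1 : ⟪B y, x⟫_ℂ = starRingEnd ℂ ⟪B x, y⟫_ℂ := by
    rw [hsym.apply_clm y x]
    exact (inner_conj_symm _ _).symm
  have hpol : (⟪B (x + y), x + y⟫_ℂ).re - (⟪B (x - y), x - y⟫_ℂ).re
      = 4 * (⟪B x, y⟫_ℂ).re := by
    rw [map_add, map_sub, inner_add_left, inner_add_right, inner_add_right,
      inner_sub_left, inner_sub_right, inner_sub_right, e1]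
    simp only [Complex.add_re, Complex.sub_re, Complex.conj_re]
    ring
  have h1 : (⟪B (x + y), x + y⟫_ℂ).re ≤ M * ‖x + y‖ ^ 2 := by
    have := Complex.abs_re_le_norm ⟪B (x + y), x + y⟫_ℂ
    have := abs_le.mp (le_trans this (h' (x + y)))
    linarith [this.2]
  have h2 : -(⟪B (x - y), x - y⟫_ℂ).re ≤ M * ‖x - y‖ ^ 2 := by
    have := Complex.abs_re_le_norm ⟪B (x - y), x - y⟫_ℂ
    have := abs_le.mp (le_trans this (h' (x - y)))
    linarith [this.1]
  have hpar : ‖x + y‖ ^ 2 + ‖x - y‖ ^ 2 = 2 * (‖x‖ ^ 2 + ‖y‖ ^ 2) := by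
    have := parallelogram_law_with_norm ℂ x y
    nlinarith [this]
  have hval : (⟪B x, y⟫_ℂ).re = ‖x‖ * ‖B x‖ := by
    rw [hy, inner_smul_right]
    have hBB : ⟪B x, B x⟫_ℂ = ((‖B x‖ ^ 2 : ℝ) : ℂ) := by
      rw [inner_self_eq_norm_sq_to_K]; norm_num
    rw [hBB, ← Complex.ofReal_mul, Complex.ofReal_re]
    field_simp
  have hmain : 4 * (‖x‖ * ‖B x‖) ≤ 4 * (M * ‖x‖ ^ 2) := by
    rw [← hval]
    calc 4 * (⟪B x, y⟫_ℂ).re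
        = (⟪B (x + y), x + y⟫_ℂ).re - (⟪B (x - y), x - y⟫_ℂ).re := hpol.symm
      _ ≤ M * ‖x + y‖ ^ 2 + M * ‖x - y‖ ^ 2 := by linarith
      _ = M * (‖x + y‖ ^ 2 + ‖x - y‖ ^ 2) := by ring
      _ = M * (2 * (‖x‖ ^ 2 + ‖y‖ ^ 2)) := by rw [hpar]
      _ = 4 * (M * ‖x‖ ^ 2) := by rw [hyn]; ring
  nlinarith

variable [CompleteSpace H]

lemma reP_sa (A : H →L[ℂ] H) : IsSelfAdjoint (reP A) := by
  show star _ = _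
  simp only [reP, star_smul, star_add, ContinuousLinearMap.star_eq_adjoint, adjoint_adjoint]
  rw [add_comm (adjoint A) A]
  congr 1
  simp [Complex.ext_iff]

lemma imP_sa (A : H →L[ℂ] H) : IsSelfAdjoint (imP A) := by
  show star _ = _
  simp only [imP, star_smul, star_sub, ContinuousLinearMap.star_eq_adjoint, adjoint_adjoint]
  have h1 : (star ((2 * Complex.I)⁻¹) : ℂ) = -(2 * Complex.I)⁻¹ := by
    simp [Complex.ext_iff]
  rw [h1, neg_smul, ← smul_neg, neg_sub]

lemma inner_reP (A : H →L[ℂ] H) (x : H) :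
    ⟪(reP A) x, x⟫_ℂ = (((⟪A x, x⟫_ℂ).re : ℝ) : ℂ) := by
  simp only [reP, ContinuousLinearMap.smul_apply, ContinuousLinearMap.add_apply,
    inner_smul_left, inner_add_left, adjoint_inner_left]
  rw [← inner_conj_symm x (A x)]
  rw [Complex.add_conj]
  simp [Complex.ext_iff]

lemma inner_imP (A : H →L[ℂ] H) (x : H) :
    ⟪(imP A) x, x⟫_ℂ = -(((⟪A x, x⟫_ℂ).im : ℝ) : ℂ) := by
  simp only [imP, ContinuousLinearMap.smul_apply, ContinuousLinearMap.sub_apply,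
    inner_smul_left, inner_sub_left, adjoint_inner_left]
  rw [← inner_conj_symm x (A x)]
  rw [Complex.sub_conj]
  have : (starRingEnd ℂ) ((2 * Complex.I)⁻¹) = -(2 * Complex.I)⁻¹ := by
    simp [Complex.ext_iff]
  rw [this]
  field_simp [Complex.I_ne_zero]
  ring_nf
  push_cast
  rfl

lemma sq_id (A : H →L[ℂ] H) :
    (reP A + imP A) * (reP A + imP A) + (reP A - imP A) * (reP A - imP A)
      = adjoint A * A + A * adjoint A := by
  ext x
  simp only [reP, imP, ContinuousLinearMap.mul_apply, ContinuousLinearMap.add_apply,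
    ContinuousLinearMap.sub_apply, ContinuousLinearMap.smul_apply, map_add, map_sub, map_smul]
  match_scalars <;> field_simp <;> ring_nf <;>
    first
      | rfl
      | linear_combination (8 * Complex.I) * Complex.I_sq
      | linear_combination (-8 * Complex.I) * Complex.I_sq
      | linear_combination (2 : ℂ) * Complex.I_sq
      | linear_combination (-2 : ℂ) * Complex.I_sq

/-- key pointwise identity -/
lemma pointwise_sq (A : H →L[ℂ] H) (x : H) :
    ‖⟪(reP A + imP A) x, x⟫_ℂ‖ ^ 2 + ‖⟪(reP A - imP A) x, x⟫_ℂ‖ ^ 2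
      = 2 * ‖⟪A x, x⟫_ℂ‖ ^ 2 := by
  set z := ⟪A x, x⟫_ℂ with hz
  have hS : ⟪(reP A + imP A) x, x⟫_ℂ = (((z.re - z.im : ℝ)) : ℂ) := by
    rw [ContinuousLinearMap.add_apply, inner_add_left, inner_reP, inner_imP]
    push_cast
    ring
  have hD : ⟪(reP A - imP A) x, x⟫_ℂ = (((z.re + z.im : ℝ)) : ℂ) := by
    rw [ContinuousLinearMap.sub_apply, inner_sub_left, inner_reP, inner_imP]
    push_cast
    ring
  rw [hS, hD, Complex.norm_real, Complex.norm_real]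
  have hzn : ‖z‖ ^ 2 = z.re ^ 2 + z.im ^ 2 := by
    rw [Complex.sq_norm, Complex.normSq_apply]
    ring
  rw [hzn]
  rw [Real.norm_eq_abs, Real.norm_eq_abs, sq_abs, sq_abs]
  ring

end Aux

theorem stmt1 {H : Type*} [NormedAddCommGroup H] [InnerProductSpace ℂ H]
    [CompleteSpace H] [Nontrivial H] (A : H →L[ℂ] H) :
    (1/4 : ℝ) * ‖adjoint A * A + A * adjoint A‖ ≤
        (1/4 : ℝ) * ‖reP A + imP A‖ ^ 2 + (1/4 : ℝ) * ‖reP A - imP A‖ ^ 2 ∧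
    (1/4 : ℝ) * ‖reP A + imP A‖ ^ 2 + (1/4 : ℝ) * ‖reP A - imP A‖ ^ 2 ≤
        (1/4 : ℝ) * ‖reP A + imP A‖ ^ 2 + (1/4 : ℝ) * ‖reP A - imP A‖ ^ 2 +
          (1/4 : ℝ) * crawford (reP A + imP A) ^ 2 +
          (1/4 : ℝ) * crawford (reP A - imP A) ^ 2 ∧
    (1/4 : ℝ) * ‖reP A + imP A‖ ^ 2 + (1/4 : ℝ) * ‖reP A - imP A‖ ^ 2 +
        (1/4 : ℝ) * crawford (reP A + imP A) ^ 2 +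
        (1/4 : ℝ) * crawford (reP A - imP A) ^ 2 ≤ numRadius A ^ 2 := by
  set S := reP A + imP A with hSdef
  set D := reP A - imP A with hDdef
  have hSsa : IsSelfAdjoint S := (reP_sa A).add (imP_sa A)
  have hDsa : IsSelfAdjoint D := (reP_sa A).sub (imP_sa A)
  obtain ⟨x₀, hx₀⟩ := exists_norm_eq H (zero_le_one)
  have hw : ∀ x : H, ‖x‖ = 1 → ‖⟪A x, x⟫_ℂ‖ ≤ numRadius A := fun x hx => le_numRadius A hx
  have hw0 : 0 ≤ numRadius A := le_trans (norm_nonneg _) (hw x₀ hx₀)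
  have hcS0 : 0 ≤ crawford S := crawford_nonneg S
  have hcD0 : 0 ≤ crawford D := crawford_nonneg D
  -- squared bounds for crawford numbers
  have hcD2 : crawford D ^ 2 ≤ 2 * numRadius A ^ 2 := by
    have h1 := crawford_le D hx₀
    have h2 := pointwise_sq A x₀
    have h3 := hw x₀ hx₀
    nlinarith [norm_nonneg (⟪S x₀, x₀⟫_ℂ), norm_nonneg (⟪D x₀, x₀⟫_ℂ), norm_nonneg (⟪A x₀, x₀⟫_ℂ)]
  have hcS2 : crawford S ^ 2 ≤ 2 * numRadius A ^ 2 := by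
    have h1 := crawford_le S hx₀
    have h2 := pointwise_sq A x₀
    have h3 := hw x₀ hx₀
    nlinarith [norm_nonneg (⟪S x₀, x₀⟫_ℂ), norm_nonneg (⟪D x₀, x₀⟫_ℂ), norm_nonneg (⟪A x₀, x₀⟫_ℂ)]
  -- main bounds : ‖S‖^2 + crawford D ^ 2 ≤ 2 w^2 and symmetric
  have hSbound : ‖S‖ ^ 2 + crawford D ^ 2 ≤ 2 * numRadius A ^ 2 := by
    set t : ℝ := 2 * numRadius A ^ 2 - crawford D ^ 2 with ht
    have ht0 : 0 ≤ t := by rw [ht]; linarith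
    have hle : ‖S‖ ≤ Real.sqrt t := by
      refine norm_le_of_selfAdjoint hSsa (Real.sqrt_nonneg t) fun x hx => ?_
      rw [show ‖⟪S x, x⟫_ℂ‖ = Real.sqrt (‖⟪S x, x⟫_ℂ‖ ^ 2) from
        (Real.sqrt_sq (norm_nonneg _)).symm]
      apply Real.sqrt_le_sqrt
      have h2 := pointwise_sq A x
      have h3 := hw x hx
      have h4 := crawford_le D hx
      rw [ht]
      nlinarith [norm_nonneg (⟪A x, x⟫_ℂ), norm_nonneg (⟪D x, x⟫_ℂ)]
    have := pow_le_pow_left₀ (norm_nonneg S) hle 2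
    rw [Real.sq_sqrt ht0] at this
    rw [ht] at this
    linarith
  have hDbound : ‖D‖ ^ 2 + crawford S ^ 2 ≤ 2 * numRadius A ^ 2 := by
    set t : ℝ := 2 * numRadius A ^ 2 - crawford S ^ 2 with ht
    have ht0 : 0 ≤ t := by rw [ht]; linarith
    have hle : ‖D‖ ≤ Real.sqrt t := by
      refine norm_le_of_selfAdjoint hDsa (Real.sqrt_nonneg t) fun x hx => ?_
      rw [show ‖⟪D x, x⟫_ℂ‖ = Real.sqrt (‖⟪D x, x⟫_ℂ‖ ^ 2) from
        (Real.sqrt_sq (norm_nonneg _)).symm]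
      apply Real.sqrt_le_sqrt
      have h2 := pointwise_sq A x
      have h3 := hw x hx
      have h4 := crawford_le S hx
      rw [ht]
      nlinarith [norm_nonneg (⟪A x, x⟫_ℂ), norm_nonneg (⟪S x, x⟫_ℂ)]
    have := pow_le_pow_left₀ (norm_nonneg D) hle 2
    rw [Real.sq_sqrt ht0] at this
    rw [ht] at this
    linarith
  refine ⟨?_, ?_, ?_⟩
  · -- first inequality
    rw [← sq_id A]
    have h1 : ‖S * S + D * D‖ ≤ ‖S‖ * ‖S‖ + ‖D‖ * ‖D‖ :=
      le_trans (norm_add_le _ _) (add_le_add (norm_mul_le _ _) (norm_mul_le _ _))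
    nlinarith [h1]
  · nlinarith [sq_nonneg (crawford S), sq_nonneg (crawford D)]
  · linarith
end

section
/- For every bounded linear operator A on a complex Hilbert space, (1/4)‖A*A + AA*‖ ≤ (1/(2√2))( ‖Re(A) + Im(A)‖⁴ + ‖Re(A) − Im(A)‖⁴ )^{1/2} ≤ w²(A). -/
open scoped InnerProductSpace
open ContinuousLinearMap

section Aux

variable {H : Type*} [NormedAddCommGroup H] [InnerProductSpace ℂ H] [CompleteSpace H]

/-- A self-adjoint operator whose numerical range is bounded by `M` has norm at most `M`. -/
lemma selfAdjoint_norm_le' (T : H →L[ℂ] H) (hT : IsSelfAdjoint T) {M : ℝ} (hM : 0 ≤ M)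
    (h : ∀ x : H, ‖x‖ = 1 → ‖⟪T x, x⟫_ℂ‖ ≤ M) : ‖T‖ ≤ M := by
  -- step 1
  have h1 : ∀ x : H, ‖⟪T x, x⟫_ℂ‖ ≤ M * ‖x‖ ^ 2 := by
    intro x
    rcases eq_or_ne x 0 with rfl | hx
    · simp
    · have hn : ‖x‖ ≠ 0 := norm_ne_zero_iff.mpr hx
      set u := (‖x‖⁻¹ : ℂ) • x with hu
      have hu1 : ‖u‖ = 1 := by simp [hu, norm_smul, hn]
      have := h u hu1
      have hiu : ⟪T u, u⟫_ℂ = (‖x‖⁻¹ : ℂ) * (‖x‖⁻¹ : ℂ) * ⟪T x, x⟫_ℂ := by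
        simp only [hu, map_smul, inner_smul_left, inner_smul_right, Complex.conj_ofReal,
          Complex.conj_inv]
        ring
      rw [hiu, norm_mul, norm_mul] at this
      simp only [norm_inv, Complex.norm_real, norm_norm] at this
      have hpos : (0:ℝ) < ‖x‖ := lt_of_le_of_ne (norm_nonneg x) (Ne.symm hn)
      calc ‖⟪T x, x⟫_ℂ‖ = ‖x‖ * ‖x‖ * (‖x‖⁻¹ * ‖x‖⁻¹ * ‖⟪T x, x⟫_ℂ‖) := by field_simp
        _ ≤ ‖x‖ * ‖x‖ * M := mul_le_mul_of_nonneg_left this (by positivity)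
        _ = M * ‖x‖ ^ 2 := by ring
  -- step 2
  have h2 : ∀ x y : H, 4 * Complex.re ⟪T x, y⟫_ℂ ≤ 2 * M * (‖x‖ ^ 2 + ‖y‖ ^ 2) := by
    intro x y
    have hyx : ⟪T y, x⟫_ℂ = (starRingEnd ℂ) ⟪T x, y⟫_ℂ := by
      conv_lhs => rw [← hT.adjoint_eq]
      rw [adjoint_inner_left, ← inner_conj_symm]
    have hac : ⟪T x, y⟫_ℂ + (starRingEnd ℂ) ⟪T x, y⟫_ℂ = 2 * (((⟪T x, y⟫_ℂ).re : ℝ) : ℂ) := by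
      rw [Complex.add_conj]; push_cast; ring
    have key : ⟪T (x + y), x + y⟫_ℂ - ⟪T (x - y), x - y⟫_ℂ
        = 2 * (2 * (((⟪T x, y⟫_ℂ).re : ℝ) : ℂ)) := by
      rw [← hac]
      simp only [map_add, map_sub, inner_add_left, inner_add_right, inner_sub_left,
        inner_sub_right, hyx]
      ring
    have hre : (⟪T (x + y), x + y⟫_ℂ).re - (⟪T (x - y), x - y⟫_ℂ).re
        = 4 * (⟪T x, y⟫_ℂ).re := by
      rw [← Complex.sub_re, key]
      simp
      ring
    have b1 : (⟪T (x + y), x + y⟫_ℂ).re ≤ M * ‖x + y‖ ^ 2 := by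
      have ha := Complex.abs_re_le_norm (⟪T (x + y), x + y⟫_ℂ)
      have := (abs_le.mp ha).2.trans (h1 _)
      linarith
    have b2 : -(⟪T (x - y), x - y⟫_ℂ).re ≤ M * ‖x - y‖ ^ 2 := by
      have ha := Complex.abs_re_le_norm (⟪T (x - y), x - y⟫_ℂ)
      have := ha.trans (h1 _)
      linarith [neg_abs_le ((⟪T (x - y), x - y⟫_ℂ).re)]
    have hpar := parallelogram_law_with_norm ℂ x y
    nlinarith [hre, b1, b2, hpar]
  -- step 3
  have h3 : ∀ x : H, ‖T x‖ ≤ M * ‖x‖ := by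
    intro x
    rcases eq_or_ne (T x) 0 with hz | hz
    · simp [hz]; positivity
    · have hTx : (0:ℝ) < ‖T x‖ := norm_pos_iff.mpr hz
      set y : H := ((‖x‖ / ‖T x‖ : ℝ) : ℂ) • T x with hy
      have hyn : ‖y‖ = ‖x‖ := by
        simp [hy, norm_smul, abs_of_nonneg (div_nonneg (norm_nonneg x) (norm_nonneg _)),
          div_mul_cancel₀, hTx.ne']
      rcases eq_or_ne x 0 with rfl | hx0
      · exact absurd (map_zero T) hz
      have hxpos : (0:ℝ) < ‖x‖ := norm_pos_iff.mpr hx0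
      have hrei : (⟪T x, y⟫_ℂ).re = ‖x‖ * ‖T x‖ := by
        rw [hy, inner_smul_right]
        have h5 : (⟪T x, T x⟫_ℂ) = ((‖T x‖ : ℝ) : ℂ) ^ 2 := inner_self_eq_norm_sq_to_K (T x)
        rw [h5]
        have h6 : ((‖x‖ / ‖T x‖ : ℝ) : ℂ) * ((‖T x‖ : ℝ) : ℂ) ^ 2
            = (((‖x‖ / ‖T x‖) * ‖T x‖ ^ 2 : ℝ) : ℂ) := by push_cast; ring
        rw [h6, Complex.ofReal_re]
        field_simp
      have h7 := h2 x y
      rw [hrei, hyn] at h7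
      have h4 : ‖x‖ * ‖T x‖ ≤ M * ‖x‖ ^ 2 := by linarith
      calc ‖T x‖ = ‖x‖ * ‖T x‖ / ‖x‖ := by field_simp
        _ ≤ M * ‖x‖ ^ 2 / ‖x‖ := by gcongr
        _ = M * ‖x‖ := by field_simp
  exact T.opNorm_le_bound hM h3

lemma decomp_add' (A : H →L[ℂ] H) :
    reP A + imP A = ((1 - Complex.I)/2) • A
      + ((starRingEnd ℂ) ((1 - Complex.I)/2)) • adjoint A := by
  rw [reP, imP]
  have : (starRingEnd ℂ) ((1 - Complex.I)/2) = (1 + Complex.I)/2 := by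
    simp [map_div₀, Complex.conj_I, map_ofNat]; try ring
  rw [this]
  match_scalars <;> (field_simp; ring_nf) <;> simp [Complex.I_sq] <;> ring

lemma decomp_sub' (A : H →L[ℂ] H) :
    reP A - imP A = ((1 + Complex.I)/2) • A
      + ((starRingEnd ℂ) ((1 + Complex.I)/2)) • adjoint A := by
  rw [reP, imP]
  have : (starRingEnd ℂ) ((1 + Complex.I)/2) = (1 - Complex.I)/2 := by
    simp [map_div₀, Complex.conj_I, map_ofNat]; try ring
  rw [this]
  match_scalars <;> (field_simp; ring_nf) <;> simp [Complex.I_sq] <;> ring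

lemma selfAdj_comb (A : H →L[ℂ] H) (c : ℂ) :
    IsSelfAdjoint (c • A + ((starRingEnd ℂ) c) • adjoint A) := by
  rw [IsSelfAdjoint]
  rw [star_add, star_smul, star_smul, star_eq_adjoint, star_eq_adjoint, adjoint_adjoint]
  simp [add_comm]

lemma comb_inner_bound (A : H →L[ℂ] H) (c : ℂ) {w : ℝ}
    (hw : ∀ x : H, ‖x‖ = 1 → ‖⟪A x, x⟫_ℂ‖ ≤ w) :
    ∀ x : H, ‖x‖ = 1 →
      ‖⟪(c • A + ((starRingEnd ℂ) c) • adjoint A) x, x⟫_ℂ‖ ≤ 2 * ‖c‖ * w := by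
  intro x hx
  set z := ⟪A x, x⟫_ℂ with hz
  have hval : ⟪(c • A + ((starRingEnd ℂ) c) • adjoint A) x, x⟫_ℂ
      = (starRingEnd ℂ) c * z + (starRingEnd ℂ) ((starRingEnd ℂ) c * z) := by
    simp only [add_apply, smul_apply, inner_add_left, inner_smul_left, map_mul,
      Complex.conj_conj]
    rw [adjoint_inner_left, ← inner_conj_symm x (A x)]
  rw [hval, Complex.add_conj]
  have h1 : ‖(((2 * ((starRingEnd ℂ) c * z).re : ℝ)) : ℂ)‖ = |2 * ((starRingEnd ℂ) c * z).re| :=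
    Complex.norm_real _
  rw [h1]
  have h2 : |((starRingEnd ℂ) c * z).re| ≤ ‖(starRingEnd ℂ) c * z‖ := by
    have := Complex.abs_re_le_norm ((starRingEnd ℂ) c * z)
    exact this
  have h3 : ‖(starRingEnd ℂ) c * z‖ = ‖c‖ * ‖z‖ := by
    rw [norm_mul, RCLike.norm_conj]
  have h4 : ‖z‖ ≤ w := hw x hx
  rw [abs_mul, abs_two]
  calc 2 * |((starRingEnd ℂ) c * z).re| ≤ 2 * (‖c‖ * ‖z‖) := by
        rw [← h3]; linarith
    _ ≤ 2 * (‖c‖ * w) := by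
        have := mul_le_mul_of_nonneg_left h4 (norm_nonneg c)
        linarith
    _ = 2 * ‖c‖ * w := by ring

lemma op_id' (A : H →L[ℂ] H) :
    adjoint A * A + A * adjoint A
      = (reP A + imP A) * (reP A + imP A) + (reP A - imP A) * (reP A - imP A) := by
  have e1 : reP A + imP A = ((1 - Complex.I)/2) • A + ((1 + Complex.I)/2) • adjoint A := by
    rw [reP, imP]
    match_scalars <;> (field_simp; ring_nf) <;> simp [Complex.I_sq] <;> ring
  have e2 : reP A - imP A = ((1 + Complex.I)/2) • A + ((1 - Complex.I)/2) • adjoint A := by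
    rw [reP, imP]
    match_scalars <;> (field_simp; ring_nf) <;> simp [Complex.I_sq] <;> ring
  rw [e1, e2]
  ext x
  simp only [ContinuousLinearMap.mul_apply, add_apply, smul_apply, map_add, map_smul, coe_smul', Pi.smul_apply,
    Pi.add_apply]
  match_scalars <;> (field_simp; ring_nf) <;> simp [Complex.I_sq] <;> ring

end Aux

theorem stmt6 {H : Type*} [NormedAddCommGroup H] [InnerProductSpace ℂ H]
    [CompleteSpace H] [Nontrivial H] (A : H →L[ℂ] H) :
    (1/4 : ℝ) * ‖adjoint A * A + A * adjoint A‖ ≤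
        (1 / (2 * Real.sqrt 2)) *
          Real.sqrt (‖reP A + imP A‖ ^ 4 + ‖reP A - imP A‖ ^ 4) ∧
    (1 / (2 * Real.sqrt 2)) *
        Real.sqrt (‖reP A + imP A‖ ^ 4 + ‖reP A - imP A‖ ^ 4) ≤ numRadius A ^ 2 := by
  set w := numRadius A with hwdef
  -- basic facts about the numerical radius
  have hbdd : BddAbove {r : ℝ | ∃ x : H, ‖x‖ = 1 ∧ r = ‖⟪A x, x⟫_ℂ‖} := by
    refine ⟨‖A‖, ?_⟩
    rintro r ⟨x, hx, rfl⟩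
    calc ‖⟪A x, x⟫_ℂ‖ ≤ ‖A x‖ * ‖x‖ := norm_inner_le_norm _ _
      _ ≤ (‖A‖ * ‖x‖) * ‖x‖ := by gcongr; exact A.le_opNorm x
      _ = ‖A‖ := by rw [hx]; ring
  have hw : ∀ x : H, ‖x‖ = 1 → ‖⟪A x, x⟫_ℂ‖ ≤ w := by
    intro x hx
    exact le_csSup hbdd ⟨x, hx, rfl⟩
  have hw0 : 0 ≤ w := by
    obtain ⟨x0, hx0⟩ := exists_norm_eq H (zero_le_one)
    exact (norm_nonneg _).trans (hw x0 hx0)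
  -- the scalar √2
  set t := Real.sqrt 2 with htdef
  have ht2 : t ^ 2 = 2 := Real.sq_sqrt (by norm_num)
  have ht0 : (0:ℝ) < t := Real.sqrt_pos.mpr (by norm_num)
  -- norms of the coefficients
  have habs1 : ‖((1 - Complex.I)/2 : ℂ)‖ = t / 2 := by
    rw [norm_div, Complex.norm_def, Complex.normSq_apply]
    simp only [Complex.sub_re, Complex.one_re, Complex.I_re, Complex.sub_im, Complex.one_im,
      Complex.I_im, Complex.norm_ofNat]
    norm_num
    exact htdef.symm
  have habs2 : ‖((1 + Complex.I)/2 : ℂ)‖ = t / 2 := by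
    rw [norm_div, Complex.norm_def, Complex.normSq_apply]
    simp only [Complex.add_re, Complex.one_re, Complex.I_re, Complex.add_im, Complex.one_im,
      Complex.I_im, Complex.norm_ofNat]
    norm_num
    exact htdef.symm
  -- bounds on the norms of reP ± imP
  have hPQ : ‖reP A + imP A‖ ≤ t * w := by
    rw [decomp_add']
    refine selfAdjoint_norm_le' _ (selfAdj_comb A _) (by positivity) ?_
    intro x hx
    have := comb_inner_bound A ((1 - Complex.I)/2) hw x hx
    rw [habs1] at this
    calc ‖_‖ ≤ 2 * (t/2) * w := this
      _ = t * w := by ring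
  have hPQ' : ‖reP A - imP A‖ ≤ t * w := by
    rw [decomp_sub']
    refine selfAdjoint_norm_le' _ (selfAdj_comb A _) (by positivity) ?_
    intro x hx
    have := comb_inner_bound A ((1 + Complex.I)/2) hw x hx
    rw [habs2] at this
    calc ‖_‖ ≤ 2 * (t/2) * w := this
      _ = t * w := by ring
  set a := ‖reP A + imP A‖ with hadef
  set b := ‖reP A - imP A‖ with hbdef
  have ha0 : 0 ≤ a := norm_nonneg _
  have hb0 : 0 ≤ b := norm_nonneg _
  set s := Real.sqrt (a ^ 4 + b ^ 4) with hsdef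
  have hs0 : 0 ≤ s := Real.sqrt_nonneg _
  have hs2 : s ^ 2 = a ^ 4 + b ^ 4 := Real.sq_sqrt (by positivity)
  -- the operator norm bound
  have hN : ‖adjoint A * A + A * adjoint A‖ ≤ a ^ 2 + b ^ 2 := by
    rw [op_id']
    refine (norm_add_le _ _).trans ?_
    have m1 : ‖(reP A + imP A) * (reP A + imP A)‖ ≤ a ^ 2 := by
      refine (norm_mul_le _ _).trans ?_
      rw [← hadef, sq]
    have m2 : ‖(reP A - imP A) * (reP A - imP A)‖ ≤ b ^ 2 := by
      refine (norm_mul_le _ _).trans ?_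
      rw [← hbdef, sq]
    linarith
  -- key scalar inequality: t*(a²+b²) ≤ 2*s
  have key1 : t * (a ^ 2 + b ^ 2) ≤ 2 * s := by
    have hsq : (t * (a ^ 2 + b ^ 2)) ^ 2 ≤ (2 * s) ^ 2 := by
      nlinarith [sq_nonneg (a ^ 2 - b ^ 2), hs2, ht2]
    have h1 := Real.sqrt_le_sqrt hsq
    rwa [Real.sqrt_sq (by positivity), Real.sqrt_sq (by positivity)] at h1
  constructor
  · -- first inequality
    rw [show (1 / (2 * t)) * s = s / (2 * t) by ring,
      le_div_iff₀ (by positivity : (0:ℝ) < 2 * t)]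
    nlinarith [mul_le_mul_of_nonneg_right hN ht0.le, key1]
  · -- second inequality
    have hs_le : s ≤ 2 * t * w ^ 2 := by
      have h4a : a ^ 4 ≤ (t * w) ^ 4 := pow_le_pow_left₀ ha0 hPQ 4
      have h4b : b ^ 4 ≤ (t * w) ^ 4 := pow_le_pow_left₀ hb0 hPQ' 4
      have hsq : a ^ 4 + b ^ 4 ≤ (2 * t * w ^ 2) ^ 2 := by nlinarith [ht2, sq_nonneg w]
      have h1 := Real.sqrt_le_sqrt hsq
      rwa [Real.sqrt_sq (by positivity)] at h1
    calc (1 / (2 * t)) * s ≤ (1 / (2 * t)) * (2 * t * w ^ 2) :=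
          mul_le_mul_of_nonneg_left hs_le (by positivity)
      _ = w ^ 2 := by field_simp
end

section
/- For every bounded linear operator A on a complex Hilbert space and every real number r ≥ 1, (1/4)‖A*A + AA*‖ ≤ (1/2)( (1/2)‖Re(A) + Im(A)‖^{2r} + (1/2)‖Re(A) − Im(A)‖^{2r} )^{1/r} ≤ w²(A). -/
open scoped InnerProductSpace
open ContinuousLinearMap

/-- A self-adjoint operator whose quadratic form is bounded by `M` has norm at most `M`. -/
theorem sa_norm_le_aux {H : Type*} [NormedAddCommGroup H] [InnerProductSpace ℂ H]
    [CompleteSpace H] (S : H →L[ℂ] H) (hS : IsSelfAdjoint S) {M : ℝ} (hM : 0 ≤ M)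
    (h : ∀ x : H, ‖x‖ = 1 → ‖⟪S x, x⟫_ℂ‖ ≤ M) : ‖S‖ ≤ M := by
  have h' : ∀ x : H, ‖⟪S x, x⟫_ℂ‖ ≤ M * ‖x‖ ^ 2 := by
    intro x
    rcases eq_or_ne x 0 with rfl | hx
    · simp
    · have hn : ‖x‖ ≠ 0 := norm_ne_zero_iff.2 hx
      have hu : ‖((‖x‖⁻¹ : ℝ) : ℂ) • x‖ = 1 := by
        simp [norm_smul, abs_of_nonneg, inv_mul_cancel₀ hn]
      have := h _ hu
      rw [map_smul, inner_smul_left, inner_smul_right] at this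
      simp only [norm_mul, RCLike.norm_conj, Complex.norm_real, Real.norm_eq_abs,
        abs_of_nonneg (inv_nonneg.2 (norm_nonneg x))] at this
      have h2 : ‖x‖⁻¹ * (‖x‖⁻¹ * ‖⟪S x, x⟫_ℂ‖) ≤ M := this
      calc ‖⟪S x, x⟫_ℂ‖ = (‖x‖⁻¹ * (‖x‖⁻¹ * ‖⟪S x, x⟫_ℂ‖)) * ‖x‖^2 := by
            field_simp
        _ ≤ M * ‖x‖^2 := mul_le_mul_of_nonneg_right h2 (by positivity)
  apply ContinuousLinearMap.opNorm_le_bound _ hM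
  intro x
  rcases eq_or_ne (S x) 0 with h0 | h0
  · simp [h0]; positivity
  have hSx : (0:ℝ) < ‖S x‖ := norm_pos_iff.2 h0
  set y : H := ((‖x‖ / ‖S x‖ : ℝ) : ℂ) • S x with hy
  have hyn : ‖y‖ = ‖x‖ := by
    rw [hy, norm_smul, Complex.norm_real, Real.norm_eq_abs,
      abs_of_nonneg (div_nonneg (norm_nonneg x) (norm_nonneg _)),
      div_mul_cancel₀ _ hSx.ne']
  have polar : (⟪S x, y⟫_ℂ).re =
      ((⟪S (x+y), x+y⟫_ℂ).re - (⟪S (x-y), x-y⟫_ℂ).re) / 4 := by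
    have hadj : ∀ u v : H, ⟪S u, v⟫_ℂ = ⟪u, S v⟫_ℂ := fun u v => by
      rw [← ContinuousLinearMap.adjoint_inner_left, hS.adjoint_eq]
    have e1 : ⟪S (x+y), x+y⟫_ℂ = ⟪S x, x⟫_ℂ + ⟪S x, y⟫_ℂ + ⟪S y, x⟫_ℂ + ⟪S y, y⟫_ℂ := by
      rw [map_add]; simp only [inner_add_left, inner_add_right]; ring
    have e2 : ⟪S (x-y), x-y⟫_ℂ = ⟪S x, x⟫_ℂ - ⟪S x, y⟫_ℂ - ⟪S y, x⟫_ℂ + ⟪S y, y⟫_ℂ := by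
      rw [map_sub]; simp only [inner_sub_left, inner_sub_right]; ring
    have e3 : ⟪S y, x⟫_ℂ = starRingEnd ℂ ⟪S x, y⟫_ℂ := by
      rw [hadj y x, inner_conj_symm]
    rw [e1, e2, e3]
    simp only [Complex.add_re, Complex.sub_re, Complex.conj_re]
    ring
  have hq : ∀ z : H, (⟪S z, z⟫_ℂ).re ≤ M * ‖z‖^2 := fun z =>
    (Complex.re_le_norm _).trans (h' z)
  have hq' : ∀ z : H, -(M * ‖z‖^2) ≤ (⟪S z, z⟫_ℂ).re := fun z => by
    have := (Complex.abs_re_le_norm (⟪S z, z⟫_ℂ)).trans (h' z)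
    rw [abs_le] at this; exact this.1
  have hpar : ‖x + y‖^2 + ‖x - y‖^2 = 2 * (‖x‖^2 + ‖y‖^2) := by
    have := parallelogram_law_with_norm ℂ x y
    nlinarith [this]
  rw [hyn] at hpar
  have key : (⟪S x, y⟫_ℂ).re ≤ M * ‖x‖^2 := by
    rw [polar]
    have h1 := hq (x + y)
    have h2 := hq' (x - y)
    nlinarith [h1, h2]
  have hcomp : (⟪S x, y⟫_ℂ).re = ‖S x‖ * ‖x‖ := by
    have hss : (⟪S x, S x⟫_ℂ) = ((‖S x‖^2 : ℝ) : ℂ) := by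
      rw [inner_self_eq_norm_sq_to_K]; norm_cast
    rw [hy, inner_smul_right, Complex.re_ofReal_mul, hss, Complex.ofReal_re]
    field_simp
  rw [hcomp] at key
  rcases eq_or_ne x 0 with rfl | hx
  · simp
  · have hxn : (0:ℝ) < ‖x‖ := norm_pos_iff.2 hx
    nlinarith [key]

theorem op_identity_aux {H : Type*} [NormedAddCommGroup H] [InnerProductSpace ℂ H]
    [CompleteSpace H] (A B : H →L[ℂ] H) :
    (((2:ℂ)⁻¹) • (A + B) + ((2*Complex.I)⁻¹) • (A - B)) ^ 2
      + (((2:ℂ)⁻¹) • (A + B) - ((2*Complex.I)⁻¹) • (A - B)) ^ 2 = B * A + A * B := by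
  have hI : ((2*Complex.I)⁻¹ : ℂ) = -(Complex.I/2) := by
    field_simp [Complex.I_ne_zero]
    simp [Complex.ext_iff]
  rw [hI]
  simp only [sq, smul_add, smul_sub, mul_add, add_mul, mul_sub, sub_mul,
    smul_mul_assoc, mul_smul_comm, smul_smul]
  match_scalars <;> simp [Complex.ext_iff] <;> ring

theorem pm2_aux (u v : ℝ) (hu : 0 ≤ u) (hv : 0 ≤ v) {p : ℝ} (hp : 1 ≤ p) :
    (1/2 : ℝ)*u + (1/2 : ℝ)*v ≤ ((1/2 : ℝ)*u^p + (1/2 : ℝ)*v^p)^(1/p) := by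
  have := Real.arith_mean_le_rpow_mean (Finset.univ : Finset (Fin 2)) ![1/2, 1/2] ![u, v]
    (by intro i _; fin_cases i <;> norm_num)
    (by simp [Fin.sum_univ_two]; norm_num)
    (by intro i _; fin_cases i <;> simpa) hp
  simpa [Fin.sum_univ_two] using this

theorem stmt8 {H : Type*} [NormedAddCommGroup H] [InnerProductSpace ℂ H]
    [CompleteSpace H] [Nontrivial H] (A : H →L[ℂ] H) (r : ℝ) (hr : 1 ≤ r) :
    (1/4 : ℝ) * ‖adjoint A * A + A * adjoint A‖ ≤
        (1/2 : ℝ) * ((1/2 : ℝ) * ‖reP A + imP A‖ ^ (2 * r) +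
          (1/2 : ℝ) * ‖reP A - imP A‖ ^ (2 * r)) ^ (1 / r) ∧
    (1/2 : ℝ) * ((1/2 : ℝ) * ‖reP A + imP A‖ ^ (2 * r) +
        (1/2 : ℝ) * ‖reP A - imP A‖ ^ (2 * r)) ^ (1 / r) ≤ numRadius A ^ 2 := by
  have hr0 : (0:ℝ) < r := lt_of_lt_of_le one_pos hr
  set a : ℝ := ‖reP A + imP A‖ with ha_def
  set b : ℝ := ‖reP A - imP A‖ with hb_def
  set w : ℝ := numRadius A with hw_def
  -- basic facts about the numerical radius
  have hbdd : BddAbove {t : ℝ | ∃ x : H, ‖x‖ = 1 ∧ t = ‖⟪A x, x⟫_ℂ‖} := by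
    refine ⟨‖A‖, ?_⟩
    rintro t ⟨x, hx, rfl⟩
    calc ‖⟪A x, x⟫_ℂ‖ ≤ ‖A x‖ * ‖x‖ := norm_inner_le_norm _ _
      _ ≤ (‖A‖ * ‖x‖) * ‖x‖ := by
          apply mul_le_mul_of_nonneg_right (A.le_opNorm x) (norm_nonneg x)
      _ = ‖A‖ := by rw [hx]; ring
  have hwmem : ∀ x : H, ‖x‖ = 1 → ‖⟪A x, x⟫_ℂ‖ ≤ w :=
    fun x hx => le_csSup hbdd ⟨x, hx, rfl⟩
  have hw0 : 0 ≤ w := by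
    obtain ⟨x0, hx0⟩ := exists_norm_eq H (zero_le_one : (0:ℝ) ≤ 1)
    exact le_trans (norm_nonneg _) (hwmem x0 hx0)
  -- self-adjointness of reP A ± imP A
  have hadj_sum : adjoint (reP A + imP A) = reP A + imP A := by
    simp only [reP, imP, map_add, map_sub, map_smulₛₗ, adjoint_adjoint, map_inv₀, map_mul,
      Complex.conj_I, map_ofNat]
    match_scalars <;> simp [Complex.ext_iff] <;> ring
  have hadj_sub : adjoint (reP A - imP A) = reP A - imP A := by
    simp only [reP, imP, map_add, map_sub, map_smulₛₗ, adjoint_adjoint, map_inv₀, map_mul,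
      Complex.conj_I, map_ofNat]
    match_scalars <;> simp [Complex.ext_iff] <;> ring
  have hsa1 : IsSelfAdjoint (reP A + imP A) :=
    (ContinuousLinearMap.isSelfAdjoint_iff' ).2 hadj_sum
  have hsa2 : IsSelfAdjoint (reP A - imP A) :=
    (ContinuousLinearMap.isSelfAdjoint_iff').2 hadj_sub
  -- norm of the constants
  have hnc1 : ‖((1 + Complex.I)/2 : ℂ)‖ = Real.sqrt 2 / 2 := by
    rw [norm_div, Complex.norm_def,
      Complex.norm_def]
    simp [Complex.normSq_apply]
    norm_num
  have hnc2 : ‖((1 - Complex.I)/2 : ℂ)‖ = Real.sqrt 2 / 2 := by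
    rw [norm_div, Complex.norm_def,
      Complex.norm_def]
    simp [Complex.normSq_apply]
    norm_num
  -- quadratic form bounds
  have hq1 : ∀ x : H, ‖x‖ = 1 → ‖⟪(reP A + imP A) x, x⟫_ℂ‖ ≤ Real.sqrt 2 * w := by
    intro x hx
    have e : ⟪(reP A + imP A) x, x⟫_ℂ =
        ((1 + Complex.I)/2) * ⟪A x, x⟫_ℂ +
          ((1 - Complex.I)/2) * (starRingEnd ℂ) ⟪A x, x⟫_ℂ := by
      simp only [reP, imP, ContinuousLinearMap.add_apply, ContinuousLinearMap.smul_apply,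
        ContinuousLinearMap.sub_apply, inner_add_left, inner_smul_left, inner_sub_left,
        ContinuousLinearMap.adjoint_inner_left]
      rw [← inner_conj_symm x (A x)]
      generalize ⟪A x, x⟫_ℂ = z
      simp [Complex.ext_iff]
      constructor <;> ring
    rw [e]
    calc ‖((1 + Complex.I)/2) * ⟪A x, x⟫_ℂ +
          ((1 - Complex.I)/2) * (starRingEnd ℂ) ⟪A x, x⟫_ℂ‖
        ≤ ‖((1 + Complex.I)/2) * ⟪A x, x⟫_ℂ‖ +
          ‖((1 - Complex.I)/2) * (starRingEnd ℂ) ⟪A x, x⟫_ℂ‖ := norm_add_le _ _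
      _ = Real.sqrt 2 * ‖⟪A x, x⟫_ℂ‖ := by
          rw [norm_mul, norm_mul, hnc1, hnc2, RCLike.norm_conj]; ring
      _ ≤ Real.sqrt 2 * w := by
          apply mul_le_mul_of_nonneg_left (hwmem x hx) (Real.sqrt_nonneg 2)
  have hq2 : ∀ x : H, ‖x‖ = 1 → ‖⟪(reP A - imP A) x, x⟫_ℂ‖ ≤ Real.sqrt 2 * w := by
    intro x hx
    have e : ⟪(reP A - imP A) x, x⟫_ℂ =
        ((1 - Complex.I)/2) * ⟪A x, x⟫_ℂ +
          ((1 + Complex.I)/2) * (starRingEnd ℂ) ⟪A x, x⟫_ℂ := by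
      simp only [reP, imP, ContinuousLinearMap.add_apply, ContinuousLinearMap.smul_apply,
        ContinuousLinearMap.sub_apply, inner_add_left, inner_smul_left, inner_sub_left,
        ContinuousLinearMap.adjoint_inner_left]
      rw [← inner_conj_symm x (A x)]
      generalize ⟪A x, x⟫_ℂ = z
      simp [Complex.ext_iff]
      constructor <;> ring
    rw [e]
    calc ‖((1 - Complex.I)/2) * ⟪A x, x⟫_ℂ +
          ((1 + Complex.I)/2) * (starRingEnd ℂ) ⟪A x, x⟫_ℂ‖
        ≤ ‖((1 - Complex.I)/2) * ⟪A x, x⟫_ℂ‖ +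
          ‖((1 + Complex.I)/2) * (starRingEnd ℂ) ⟪A x, x⟫_ℂ‖ := norm_add_le _ _
      _ = Real.sqrt 2 * ‖⟪A x, x⟫_ℂ‖ := by
          rw [norm_mul, norm_mul, hnc1, hnc2, RCLike.norm_conj]; ring
      _ ≤ Real.sqrt 2 * w := by
          apply mul_le_mul_of_nonneg_left (hwmem x hx) (Real.sqrt_nonneg 2)
  have hM0 : 0 ≤ Real.sqrt 2 * w := mul_nonneg (Real.sqrt_nonneg 2) hw0
  have haM : a ≤ Real.sqrt 2 * w := sa_norm_le_aux _ hsa1 hM0 hq1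
  have hbM : b ≤ Real.sqrt 2 * w := sa_norm_le_aux _ hsa2 hM0 hq2
  have ha0 : 0 ≤ a := norm_nonneg _
  have hb0 : 0 ≤ b := norm_nonneg _
  have hsq2 : Real.sqrt 2 ^ 2 = 2 := Real.sq_sqrt (by norm_num)
  have ha2 : a^2 ≤ 2 * w^2 := by nlinarith
  have hb2 : b^2 ≤ 2 * w^2 := by nlinarith
  -- rpow rewriting
  have hrpa : a ^ (2 * r) = (a^2 : ℝ) ^ r := by
    rw [Real.rpow_mul ha0, show ((2:ℝ) : ℝ) = ((2:ℕ) : ℝ) by norm_num, Real.rpow_natCast]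
  have hrpb : b ^ (2 * r) = (b^2 : ℝ) ^ r := by
    rw [Real.rpow_mul hb0, show ((2:ℝ) : ℝ) = ((2:ℕ) : ℝ) by norm_num, Real.rpow_natCast]
  set E : ℝ := (1/2 : ℝ) * a ^ (2*r) + (1/2 : ℝ) * b ^ (2*r) with hE_def
  have hE0 : 0 ≤ E := by
    have := Real.rpow_nonneg ha0 (2*r)
    have := Real.rpow_nonneg hb0 (2*r)
    rw [hE_def]; linarith
  constructor
  · -- first inequality
    have key : (reP A + imP A)^2 + (reP A - imP A)^2 = adjoint A * A + A * adjoint A := by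
      simp only [reP, imP]
      exact op_identity_aux A (adjoint A)
    have hnorm : ‖adjoint A * A + A * adjoint A‖ ≤ a^2 + b^2 := by
      rw [← key]
      calc ‖(reP A + imP A)^2 + (reP A - imP A)^2‖
          ≤ ‖(reP A + imP A)^2‖ + ‖(reP A - imP A)^2‖ := norm_add_le _ _
        _ ≤ a^2 + b^2 := by
            apply add_le_add
            · rw [sq, sq]; exact norm_mul_le _ _
            · rw [sq, sq]; exact norm_mul_le _ _
    -- power mean inequality
    have hpm : (1/2 : ℝ) * a^2 + (1/2 : ℝ) * b^2 ≤ E ^ (1/r) := by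
      have := pm2_aux (a^2) (b^2) (by positivity) (by positivity) hr
      rw [hE_def, hrpa, hrpb]
      exact this
    calc (1/4 : ℝ) * ‖adjoint A * A + A * adjoint A‖
        ≤ (1/4 : ℝ) * (a^2 + b^2) := by linarith [hnorm]
      _ = (1/2 : ℝ) * ((1/2 : ℝ) * a^2 + (1/2 : ℝ) * b^2) := by ring
      _ ≤ (1/2 : ℝ) * E ^ (1/r) := by linarith [hpm]
  · -- second inequality
    have hEb : E ≤ (2 * w^2) ^ r := by
      have h1 : (a^2 : ℝ) ^ r ≤ (2 * w^2) ^ r :=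
        Real.rpow_le_rpow (by positivity) ha2 hr0.le
      have h2 : (b^2 : ℝ) ^ r ≤ (2 * w^2) ^ r :=
        Real.rpow_le_rpow (by positivity) hb2 hr0.le
      rw [hE_def, hrpa, hrpb]; linarith
    have hfin : E ^ (1/r) ≤ 2 * w^2 := by
      calc E ^ (1/r) ≤ ((2 * w^2) ^ r) ^ (1/r) :=
            Real.rpow_le_rpow hE0 hEb (by positivity)
        _ = 2 * w^2 := by
            rw [← Real.rpow_mul (by positivity), mul_one_div, div_self hr0.ne',
              Real.rpow_one]
    linarith
end

section
/- Let A be a bounded linear operator on a complex Hilbert space with w²(A) = (1/4)‖A*A + AA*‖. Then ‖Re(A) + Im(A)‖² = ‖Re(A) − Im(A)‖² = (1/2)‖A*A + AA*‖. -/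
open scoped InnerProductSpace ComplexConjugate
open ContinuousLinearMap

section Aux

variable {H : Type*} [NormedAddCommGroup H] [InnerProductSpace ℂ H] [CompleteSpace H]

/-- Sum of squares identity. -/
lemma aux_sq_sum (A : H →L[ℂ] H) :
    (reP A + imP A)^2 + (reP A - imP A)^2 = adjoint A * A + A * adjoint A := by
  ext x
  simp only [reP, imP, pow_two, ContinuousLinearMap.mul_apply, add_apply, sub_apply, smul_apply, map_add, map_sub,
    map_smul, smul_add, smul_sub, smul_smul]
  match_scalars <;> simp [Complex.ext_iff] <;> ring

lemma aux_sa_add (A : H →L[ℂ] H) : IsSelfAdjoint (reP A + imP A) := by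
  simp only [IsSelfAdjoint, reP, imP, star_add, star_smul, star_sub, star_eq_adjoint,
    adjoint_adjoint]
  rw [show (star (2⁻¹:ℂ)) = 2⁻¹ by simp,
      show star ((2*Complex.I)⁻¹) = -(2*Complex.I)⁻¹ by simp [Complex.ext_iff]]
  module

lemma aux_sa_sub (A : H →L[ℂ] H) : IsSelfAdjoint (reP A - imP A) := by
  simp only [IsSelfAdjoint, reP, imP, star_sub, star_smul, star_add, star_eq_adjoint,
    adjoint_adjoint]
  rw [show (star (2⁻¹:ℂ)) = 2⁻¹ by simp,
      show star ((2*Complex.I)⁻¹) = -(2*Complex.I)⁻¹ by simp [Complex.ext_iff]]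
  module

/-- Norm bound for self-adjoint operators from the numerical range. -/
lemma aux_sa_norm_le (T : H →L[ℂ] H) (hT : IsSelfAdjoint T) (C : ℝ) (hC : 0 ≤ C)
    (hb : ∀ x : H, ‖⟪T x, x⟫_ℂ‖ ≤ C * ‖x‖ ^ 2) : ‖T‖ ≤ C := by
  have hsym : ∀ x y : H, ⟪T y, x⟫_ℂ = conj ⟪T x, y⟫_ℂ := by
    intro x y
    calc ⟪T y, x⟫_ℂ = ⟪adjoint T y, x⟫_ℂ := by rw [hT.adjoint_eq]
      _ = ⟪y, T x⟫_ℂ := by rw [adjoint_inner_left]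
      _ = conj ⟪T x, y⟫_ℂ := (inner_conj_symm _ _).symm
  have key : ∀ x y : H, Complex.re ⟪T x, y⟫_ℂ ≤ C / 2 * (‖x‖ ^ 2 + ‖y‖ ^ 2) := by
    intro x y
    have expand : ⟪T (x + y), x + y⟫_ℂ - ⟪T (x - y), x - y⟫_ℂ
        = 2 * (⟪T x, y⟫_ℂ + ⟪T y, x⟫_ℂ) := by
      simp only [map_add, map_sub, inner_add_left, inner_add_right, inner_sub_left,
        inner_sub_right]
      ring
    have hre : Complex.re (⟪T (x + y), x + y⟫_ℂ - ⟪T (x - y), x - y⟫_ℂ)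
        = 4 * Complex.re ⟪T x, y⟫_ℂ := by
      rw [expand, hsym x y]
      simp only [Complex.mul_re, Complex.add_re, Complex.add_im, Complex.conj_re,
        Complex.conj_im, Complex.re_ofNat, Complex.im_ofNat]
      ring
    have h1 : Complex.re ⟪T (x + y), x + y⟫_ℂ ≤ C * ‖x + y‖ ^ 2 :=
      le_trans (Complex.re_le_norm _) (hb _)
    have h2 : -Complex.re ⟪T (x - y), x - y⟫_ℂ ≤ C * ‖x - y‖ ^ 2 := by
      refine le_trans ?_ (hb _)
      calc -Complex.re ⟪T (x-y), x-y⟫_ℂ ≤ |Complex.re ⟪T (x-y), x-y⟫_ℂ| := neg_le_abs _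
        _ ≤ ‖⟪T (x-y), x-y⟫_ℂ‖ := by
            exact Complex.abs_re_le_norm _
    have hpar : ‖x + y‖ ^ 2 + ‖x - y‖ ^ 2 = 2 * (‖x‖ ^ 2 + ‖y‖ ^ 2) := by
      have := parallelogram_law_with_norm ℂ x y
      nlinarith [this]
    have h3 : 4 * Complex.re ⟪T x, y⟫_ℂ ≤ C * (‖x+y‖^2 + ‖x-y‖^2) := by
      rw [← hre, Complex.sub_re]
      nlinarith
    rw [hpar] at h3
    linarith
  refine ContinuousLinearMap.opNorm_le_bound T hC fun x => ?_
  rcases eq_or_ne (T x) 0 with h0 | h0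
  · simp [h0]; positivity
  · have hTx : (0:ℝ) < ‖T x‖ := norm_pos_iff.mpr h0
    set r : ℝ := ‖x‖ / ‖T x‖ with hr
    have hr0 : 0 ≤ r := div_nonneg (norm_nonneg x) (norm_nonneg _)
    have := key x (((r : ℂ)) • T x)
    rw [inner_smul_right] at this
    have hnorm : ‖((r:ℂ)) • T x‖ = ‖x‖ := by
      rw [norm_smul, Complex.norm_real, Real.norm_eq_abs, abs_of_nonneg hr0, hr]
      field_simp
    rw [hnorm] at this
    have hrr : Complex.re (((r:ℂ)) * ⟪T x, T x⟫_ℂ) = r * ‖T x‖^2 := by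
      simp [inner_self_eq_norm_sq_to_K, ← Complex.ofReal_pow, ← Complex.ofReal_mul]
    rw [hrr] at this
    have h4 : r * ‖T x‖ ^ 2 ≤ C * ‖x‖ ^ 2 := by linarith
    have h5 : r * ‖T x‖ ^ 2 = ‖x‖ * ‖T x‖ := by
      rw [hr]; field_simp
    rcases eq_or_lt_of_le (norm_nonneg x) with hx0 | hx0
    · exact absurd (by rw [norm_eq_zero.mp hx0.symm]; simp : T x = 0) h0
    · nlinarith [h4, h5]

end Aux

theorem stmt11 {H : Type*} [NormedAddCommGroup H] [InnerProductSpace ℂ H]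
    [CompleteSpace H] [Nontrivial H] (A : H →L[ℂ] H)
    (h : numRadius A ^ 2 = (1/4 : ℝ) * ‖adjoint A * A + A * adjoint A‖) :
    ‖reP A + imP A‖ ^ 2 = ‖reP A - imP A‖ ^ 2 ∧
    ‖reP A - imP A‖ ^ 2 = (1/2 : ℝ) * ‖adjoint A * A + A * adjoint A‖ := by
  set w : ℝ := numRadius A with hw
  set N : ℝ := ‖adjoint A * A + A * adjoint A‖ with hN
  -- a unit vector
  obtain ⟨y₀, hy₀⟩ := exists_ne (0 : H)
  have hx₀ : ‖(‖y₀‖⁻¹ • y₀ : H)‖ = 1 := by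
    rw [norm_smul, norm_inv, norm_norm]
    field_simp [norm_ne_zero_iff.mpr hy₀]
  set x₀ : H := ‖y₀‖⁻¹ • y₀
  -- basic facts about w
  have hbdd : BddAbove {r : ℝ | ∃ x : H, ‖x‖ = 1 ∧ r = ‖⟪A x, x⟫_ℂ‖} := by
    refine ⟨‖A‖, ?_⟩
    rintro r ⟨x, hx, rfl⟩
    calc ‖⟪A x, x⟫_ℂ‖ ≤ ‖A x‖ * ‖x‖ := norm_inner_le_norm _ _
      _ ≤ ‖A‖ * ‖x‖ * ‖x‖ := by
          have := A.le_opNorm x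
          nlinarith [norm_nonneg (A x), norm_nonneg x, norm_nonneg A]
      _ = ‖A‖ := by rw [hx]; ring
  have hmem : ∀ x : H, ‖x‖ = 1 → ‖⟪A x, x⟫_ℂ‖ ≤ w :=
    fun x hx => le_csSup hbdd ⟨x, hx, rfl⟩
  have hw0 : 0 ≤ w := le_trans (norm_nonneg _) (hmem x₀ hx₀)
  -- numerical radius bound for general vectors
  have hwgen : ∀ x : H, ‖⟪A x, x⟫_ℂ‖ ≤ w * ‖x‖ ^ 2 := by
    intro x
    rcases eq_or_ne x 0 with rfl | hx0
    · simp
    · have hnx : (0:ℝ) < ‖x‖ := norm_pos_iff.mpr hx0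
      set c : ℝ := ‖x‖⁻¹ with hc
      have hcx : ‖((c:ℂ)) • x‖ = 1 := by
        rw [norm_smul, Complex.norm_real, Real.norm_eq_abs, hc,
          abs_of_nonneg (inv_nonneg.mpr (norm_nonneg x))]
        field_simp
      have hsc : ⟪A (((c:ℂ)) • x), ((c:ℂ)) • x⟫_ℂ = ((c:ℂ))^2 * ⟪A x, x⟫_ℂ := by
        rw [map_smul, inner_smul_left, inner_smul_right]
        rw [Complex.conj_ofReal]
        ring
      have := hmem _ hcx
      rw [hsc] at this
      have hns : ‖((c:ℂ))^2 * ⟪A x, x⟫_ℂ‖ = c^2 * ‖⟪A x, x⟫_ℂ‖ := by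
        rw [norm_mul, norm_pow, Complex.norm_real, Real.norm_eq_abs,
          abs_of_nonneg (inv_nonneg.mpr (norm_nonneg x))]
      rw [hns] at this
      have hc2 : c^2 = (‖x‖^2)⁻¹ := by rw [hc]; field_simp
      rw [hc2] at this
      have h2 : ‖⟪A x, x⟫_ℂ‖ ≤ w * ‖x‖^2 := by
        rw [inv_mul_le_iff₀ (by positivity)] at this
        linarith [this]
      exact h2
  -- values of the numerical range of reP ± imP
  have hval : ∀ (s : ℝ) (hs : s = 1 ∨ s = -1) (x : H),
      ⟪(reP A + (s:ℂ) • imP A) x, x⟫_ℂ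
        = ((1 + (s:ℂ) * Complex.I)/2) * ⟪A x, x⟫_ℂ
          + conj (((1 + (s:ℂ) * Complex.I)/2) * ⟪A x, x⟫_ℂ) := by
    intro s hs x
    have hadj : ⟪adjoint A x, x⟫_ℂ = conj ⟪A x, x⟫_ℂ := by
      rw [adjoint_inner_left]
      exact (inner_conj_symm _ _).symm
    have c2 : (starRingEnd ℂ) ((2*Complex.I)⁻¹ : ℂ) = Complex.I/2 := by
      have hi : ((2*Complex.I)⁻¹ : ℂ) = -Complex.I/2 := by
        rw [eq_div_iff (by norm_num : (2:ℂ) ≠ 0),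
          inv_mul_eq_iff_eq_mul₀ (by simp [Complex.ext_iff] : (2*Complex.I : ℂ) ≠ 0)]
        simp [Complex.ext_iff]
      rw [hi]
      simp [Complex.ext_iff, map_ofNat]
    have c1 : (starRingEnd ℂ) (2⁻¹:ℂ) = 2⁻¹ := by norm_num [Complex.ext_iff]
    have hx1 : ⟪(reP A + (s:ℂ) • imP A) x, x⟫_ℂ =
        (2⁻¹:ℂ) * (⟪A x, x⟫_ℂ + conj ⟪A x, x⟫_ℂ)
        + (s:ℂ) * (Complex.I/2) * (⟪A x, x⟫_ℂ - conj ⟪A x, x⟫_ℂ) := by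
      simp only [reP, imP, add_apply, smul_apply, smul_smul, sub_apply, inner_smul_left,
        inner_add_left, inner_sub_left, hadj, map_mul, Complex.conj_ofReal, c1, c2]
      try ring
    rw [hx1]
    generalize ⟪A x, x⟫_ℂ = z
    rcases hs with rfl | rfl <;>
    · push_cast
      simp [Complex.ext_iff, map_ofNat]
      try constructor <;> ring
  -- square norm bound
  have hsqrt2 : Real.sqrt 2 ^ 2 = 2 := Real.sq_sqrt (by norm_num)
  have habs : ∀ s : ℝ, s = 1 ∨ s = -1 → ‖((1 + (s:ℂ) * Complex.I)/2 : ℂ)‖ = Real.sqrt 2 / 2 := by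
    rintro s (rfl | rfl) <;>
    · push_cast
      rw [norm_div]
      simp [Complex.norm_def, Complex.normSq_apply]
      norm_num
  have hbound : ∀ (s : ℝ) (hs : s = 1 ∨ s = -1) (x : H),
      ‖⟪(reP A + (s:ℂ) • imP A) x, x⟫_ℂ‖ ≤ (Real.sqrt 2 * w) * ‖x‖ ^ 2 := by
    intro s hs x
    rw [hval s hs x]
    set u : ℂ := ((1 + (s:ℂ) * Complex.I)/2) * ⟪A x, x⟫_ℂ with hu
    calc ‖u + conj u‖ ≤ ‖u‖ + ‖conj u‖ := norm_add_le _ _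
      _ = 2 * ‖u‖ := by rw [RCLike.norm_conj]; ring
      _ = 2 * (Real.sqrt 2 / 2) * ‖⟪A x, x⟫_ℂ‖ := by
          rw [hu, norm_mul, habs s hs]; ring
      _ = Real.sqrt 2 * ‖⟪A x, x⟫_ℂ‖ := by ring
      _ ≤ Real.sqrt 2 * (w * ‖x‖ ^ 2) := by
          have := hwgen x
          nlinarith [Real.sqrt_nonneg 2]
      _ = (Real.sqrt 2 * w) * ‖x‖ ^ 2 := by ring
  -- the two operators
  have hone : reP A + ((1:ℝ):ℂ) • imP A = reP A + imP A := by norm_num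
  have hmone : reP A + ((-1:ℝ):ℂ) • imP A = reP A - imP A := by
    push_cast; rw [neg_one_smul]; abel
  have hP : ‖reP A + imP A‖ ≤ Real.sqrt 2 * w := by
    refine aux_sa_norm_le _ (aux_sa_add A) _ (by positivity) ?_
    intro x
    have := hbound 1 (Or.inl rfl) x
    rwa [hone] at this
  have hM : ‖reP A - imP A‖ ≤ Real.sqrt 2 * w := by
    refine aux_sa_norm_le _ (aux_sa_sub A) _ (by positivity) ?_
    intro x
    have := hbound (-1) (Or.inr rfl) x
    rwa [hmone] at this
  -- C*-identity
  have hCP : ‖(reP A + imP A)^2‖ = ‖reP A + imP A‖^2 := by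
    rw [pow_two, pow_two]
    nth_rewrite 1 [← (aux_sa_add A)]
    exact CStarRing.norm_star_mul_self
  have hCM : ‖(reP A - imP A)^2‖ = ‖reP A - imP A‖^2 := by
    rw [pow_two, pow_two]
    nth_rewrite 1 [← (aux_sa_sub A)]
    exact CStarRing.norm_star_mul_self
  -- lower bound
  have hsum : N ≤ ‖reP A + imP A‖^2 + ‖reP A - imP A‖^2 := by
    calc N = ‖(reP A + imP A)^2 + (reP A - imP A)^2‖ := by rw [aux_sq_sum]
      _ ≤ ‖(reP A + imP A)^2‖ + ‖(reP A - imP A)^2‖ := norm_add_le _ _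
      _ = ‖reP A + imP A‖^2 + ‖reP A - imP A‖^2 := by rw [hCP, hCM]
  -- upper bounds
  have hP2 : ‖reP A + imP A‖^2 ≤ 2 * w^2 := by
    nlinarith [norm_nonneg (reP A + imP A), Real.sqrt_nonneg 2]
  have hM2 : ‖reP A - imP A‖^2 ≤ 2 * w^2 := by
    nlinarith [norm_nonneg (reP A - imP A), Real.sqrt_nonneg 2]
  constructor <;> linarith
end

section
/- For every bounded linear operator A on a complex Hilbert space, w²(A) ≤ (1/2)[ ‖A‖²·( min over t ∈ [0,1] of ‖t·A*A + (1 − t)·AA*‖ ) + w²(A²) + w(A²)·‖A*A + AA*‖ ]^{1/2}. -/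
open scoped InnerProductSpace
open ContinuousLinearMap

open scoped ComplexConjugate

/-- Buzano's inequality. -/
lemma buzano_aux {H : Type*} [NormedAddCommGroup H] [InnerProductSpace ℂ H]
    (a b e : H) (he : ‖e‖ = 1) :
    ‖⟪a, e⟫_ℂ * ⟪e, b⟫_ℂ‖ ≤ (‖a‖ * ‖b‖ + ‖⟪a, b⟫_ℂ‖) / 2 := by
  set c : ℂ := ⟪e, a⟫_ℂ with hc
  set a' : H := (2 * c) • e - a with ha'
  have hna : ‖a'‖ = ‖a‖ := by
    have h2 : ‖a'‖ ^ 2 = ‖a‖ ^ 2 := by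
      rw [ha', norm_sub_sq (𝕜 := ℂ), norm_smul, inner_smul_left, ← hc]
      have hre : RCLike.re (conj (2 * c) * c) = 2 * ‖c‖ ^ 2 := by
        simp [Complex.sq_norm, Complex.normSq_apply]
        ring
      rw [hre, he]
      have : ‖(2 : ℂ) * c‖ = 2 * ‖c‖ := by rw [norm_mul]; norm_num
      rw [this]; ring
    calc ‖a'‖ = Real.sqrt (‖a'‖ ^ 2) := (Real.sqrt_sq (norm_nonneg _)).symm
      _ = Real.sqrt (‖a‖ ^ 2) := by rw [h2]
      _ = ‖a‖ := Real.sqrt_sq (norm_nonneg _)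
  have key : (2 : ℂ) * (⟪a, e⟫_ℂ * ⟪e, b⟫_ℂ) = ⟪a, b⟫_ℂ + ⟪a', b⟫_ℂ := by
    rw [ha', inner_sub_left, inner_smul_left, hc]
    simp [mul_comm, mul_assoc, map_ofNat]
    ring
  have h3 : ‖(2 : ℂ) * (⟪a, e⟫_ℂ * ⟪e, b⟫_ℂ)‖ ≤ ‖a‖ * ‖b‖ + ‖⟪a, b⟫_ℂ‖ := by
    rw [key]
    calc ‖⟪a, b⟫_ℂ + ⟪a', b⟫_ℂ‖ ≤ ‖⟪a, b⟫_ℂ‖ + ‖⟪a', b⟫_ℂ‖ := norm_add_le _ _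
      _ ≤ ‖⟪a, b⟫_ℂ‖ + ‖a'‖ * ‖b‖ := by gcongr; exact norm_inner_le_norm _ _
      _ = ‖a‖ * ‖b‖ + ‖⟪a, b⟫_ℂ‖ := by rw [hna]; ring
  rw [norm_mul] at h3
  simp only [Complex.norm_ofNat] at h3 ⊢
  linarith

lemma e1' {H : Type*} [NormedAddCommGroup H] [InnerProductSpace ℂ H] [CompleteSpace H]
    (A : H →L[ℂ] H) (x : H) : ⟪(adjoint A * A) x, x⟫_ℂ = ((‖A x‖ ^ 2 : ℝ) : ℂ) := by
  rw [mul_apply_eq_comp, adjoint_inner_left, inner_self_eq_norm_sq_to_K]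
  norm_cast

lemma e2' {H : Type*} [NormedAddCommGroup H] [InnerProductSpace ℂ H] [CompleteSpace H]
    (A : H →L[ℂ] H) (x : H) :
    ⟪(A * adjoint A) x, x⟫_ℂ = ((‖adjoint A x‖ ^ 2 : ℝ) : ℂ) := by
  rw [mul_apply_eq_comp, ← adjoint_inner_right, inner_self_eq_norm_sq_to_K]
  norm_cast

set_option maxHeartbeats 1000000 in
theorem stmt12 {H : Type*} [NormedAddCommGroup H] [InnerProductSpace ℂ H]
    [CompleteSpace H] [Nontrivial H] (A : H →L[ℂ] H) :
    numRadius A ^ 2 ≤ (1/2 : ℝ) * Real.sqrt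
      (‖A‖ ^ 2 * sInf {s : ℝ | ∃ t ∈ Set.Icc (0 : ℝ) 1,
          s = ‖(t : ℂ) • (adjoint A * A) + ((1 - t : ℝ) : ℂ) • (A * adjoint A)‖} +
        numRadius (A ^ 2) ^ 2 +
        numRadius (A ^ 2) * ‖adjoint A * A + A * adjoint A‖) := by
  set S : Set ℝ := {s : ℝ | ∃ t ∈ Set.Icc (0 : ℝ) 1,
      s = ‖(t : ℂ) • (adjoint A * A) + ((1 - t : ℝ) : ℂ) • (A * adjoint A)‖} with hS
  set m : ℝ := sInf S with hm
  set w2 : ℝ := numRadius (A ^ 2) with hw2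
  set N : ℝ := ‖adjoint A * A + A * adjoint A‖ with hNdef
  set X : ℝ := ‖A‖ ^ 2 * m + w2 ^ 2 + w2 * N with hXdef
  have hSne : S.Nonempty := ⟨_, ⟨0, by simp, rfl⟩⟩
  have hm0 : 0 ≤ m := Real.sInf_nonneg (by rintro s ⟨t, ht, rfl⟩; positivity)
  have hw2_0 : 0 ≤ w2 := Real.sSup_nonneg (by rintro r ⟨x, hx, rfl⟩; positivity)
  have hN0 : (0 : ℝ) ≤ N := norm_nonneg _
  have hX0 : 0 ≤ X := by
    have := mul_nonneg (sq_nonneg ‖A‖) hm0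
    have := mul_nonneg hw2_0 hN0
    have := sq_nonneg w2
    rw [hXdef]; linarith
  -- bound for each unit vector
  have keyx : ∀ x : H, ‖x‖ = 1 → ‖⟪A x, x⟫_ℂ‖ ≤ Real.sqrt ((1/2 : ℝ) * Real.sqrt X) := by
    intro x hx
    set P : ℝ := ‖A x‖ with hP
    set Q : ℝ := ‖adjoint A x‖ with hQ
    set r : ℝ := ‖⟪(A ^ 2) x, x⟫_ℂ‖ with hr
    set a : ℝ := ‖⟪A x, x⟫_ℂ‖ with ha
    have hr0 : 0 ≤ r := norm_nonneg _
    have ha0 : 0 ≤ a := norm_nonneg _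
    -- Buzano step
    have h1 : a * a ≤ (P * Q + r) / 2 := by
      have hb := buzano_aux (A x) (adjoint A x) x hx
      rw [adjoint_inner_right] at hb
      rw [adjoint_inner_right] at hb
      have hppow : ⟪A (A x), x⟫_ℂ = ⟪(A ^ 2) x, x⟫_ℂ := by
        rw [pow_two, mul_apply_eq_comp]
      rw [hppow, norm_mul] at hb
      linarith
    -- r ≤ w2
    have h4 : r ≤ w2 := by
      rw [hw2, numRadius]
      apply le_csSup
      · refine ⟨‖(A ^ 2 : H →L[ℂ] H)‖, ?_⟩
        rintro b ⟨y, hy, rfl⟩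
        calc ‖⟪(A ^ 2) y, y⟫_ℂ‖ ≤ ‖(A ^ 2) y‖ * ‖y‖ := norm_inner_le_norm _ _
          _ ≤ ‖(A ^ 2 : H →L[ℂ] H)‖ * ‖y‖ * ‖y‖ := by gcongr; exact le_opNorm _ _
          _ = ‖(A ^ 2 : H →L[ℂ] H)‖ := by rw [hy]; ring
      · exact ⟨x, hx, rfl⟩
    -- 2PQ ≤ N
    have hsum : P ^ 2 + Q ^ 2 ≤ N := by
      have hin : ⟪(adjoint A * A + A * adjoint A) x, x⟫_ℂ = ((P ^ 2 + Q ^ 2 : ℝ) : ℂ) := by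
        rw [add_apply, inner_add_left, e1', e2']
        push_cast; ring
      have h5 : ‖⟪(adjoint A * A + A * adjoint A) x, x⟫_ℂ‖ ≤ N := by
        calc ‖⟪(adjoint A * A + A * adjoint A) x, x⟫_ℂ‖
            ≤ ‖(adjoint A * A + A * adjoint A) x‖ * ‖x‖ := norm_inner_le_norm _ _
          _ ≤ N * ‖x‖ * ‖x‖ := by gcongr; exact le_opNorm _ _
          _ = N := by rw [hx]; ring
      rw [hin, Complex.norm_real] at h5
      exact le_trans (le_abs_self _) h5
    have h3 : 2 * (P * Q) ≤ N := by
      have := two_mul_le_add_sq P Q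
      linarith
    -- P²Q² ≤ ‖A‖² m
    have hPQm : P ^ 2 * Q ^ 2 ≤ ‖A‖ ^ 2 * m := by
      rcases eq_or_ne P 0 with hP0 | hP0
      · rw [hP0]
        have : (0:ℝ) ≤ ‖A‖ ^ 2 * m := mul_nonneg (sq_nonneg _) hm0
        nlinarith
      rcases eq_or_ne Q 0 with hQ0 | hQ0
      · rw [hQ0]
        have : (0:ℝ) ≤ ‖A‖ ^ 2 * m := mul_nonneg (sq_nonneg _) hm0
        nlinarith
      have hPpos : 0 < P := lt_of_le_of_ne (norm_nonneg _) (Ne.symm hP0)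
      have hQpos : 0 < Q := lt_of_le_of_ne (norm_nonneg _) (Ne.symm hQ0)
      have hPA : P ≤ ‖A‖ := by
        have := A.le_opNorm x; rw [hx, mul_one] at this; exact this
      have hQA : Q ≤ ‖A‖ := by
        have := (adjoint A).le_opNorm x
        rw [hx, mul_one] at this
        have hae : ‖adjoint A‖ = ‖A‖ := by
          rw [← star_eq_adjoint]; exact norm_star A
        rw [hae] at this; exact this
      have key_t : ∀ s ∈ S, P ^ 2 * Q ^ 2 ≤ ‖A‖ ^ 2 * s := by
        rintro s ⟨t, ht, rfl⟩
        obtain ⟨ht0, ht1⟩ := Set.mem_Icc.mp ht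
        have h1t : 0 ≤ 1 - t := by linarith
        set B : H →L[ℂ] H := (t : ℂ) • (adjoint A * A) + ((1 - t : ℝ) : ℂ) • (A * adjoint A)
          with hB
        have hinB : ⟪B x, x⟫_ℂ = ((t * P ^ 2 + (1 - t) * Q ^ 2 : ℝ) : ℂ) := by
          rw [hB, add_apply, inner_add_left, smul_apply, smul_apply, inner_smul_left,
            inner_smul_left, e1', e2']
          simp only [Complex.conj_ofReal]
          push_cast; ring
        have hBt : t * P ^ 2 + (1 - t) * Q ^ 2 ≤ ‖B‖ := by
          have h5 : ‖⟪B x, x⟫_ℂ‖ ≤ ‖B‖ := by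
            calc ‖⟪B x, x⟫_ℂ‖ ≤ ‖B x‖ * ‖x‖ := norm_inner_le_norm _ _
              _ ≤ ‖B‖ * ‖x‖ * ‖x‖ := by gcongr; exact le_opNorm _ _
              _ = ‖B‖ := by rw [hx]; ring
          rw [hinB, Complex.norm_real] at h5
          exact le_trans (le_abs_self _) h5
        have g1 : (P ^ 2) ^ t * (Q ^ 2) ^ (1 - t) ≤ t * P ^ 2 + (1 - t) * Q ^ 2 :=
          Real.geom_mean_le_arith_mean2_weighted ht0 h1t (sq_nonneg _) (sq_nonneg _)
            (by ring)
        have hApos : (0:ℝ) < ‖A‖ := lt_of_lt_of_le hPpos hPA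
        have g2 : (P ^ 2) ^ (1 - t) * (Q ^ 2) ^ t ≤ ‖A‖ ^ 2 := by
          have hA2pos : (0:ℝ) < ‖A‖ ^ 2 := by positivity
          have rr1 : (P ^ 2) ^ (1 - t) ≤ (‖A‖ ^ 2) ^ (1 - t) :=
            Real.rpow_le_rpow (sq_nonneg _) (by nlinarith) h1t
          have rr2 : (Q ^ 2) ^ t ≤ (‖A‖ ^ 2) ^ t :=
            Real.rpow_le_rpow (sq_nonneg _) (by nlinarith) ht0
          calc (P ^ 2) ^ (1 - t) * (Q ^ 2) ^ t
              ≤ (‖A‖ ^ 2) ^ (1 - t) * (‖A‖ ^ 2) ^ t :=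
                mul_le_mul rr1 rr2 (Real.rpow_nonneg (sq_nonneg _) _)
                  (Real.rpow_nonneg hA2pos.le _)
            _ = ‖A‖ ^ 2 := by
                rw [← Real.rpow_add hA2pos]
                norm_num
        have hsplit : P ^ 2 * Q ^ 2
            = ((P ^ 2) ^ t * (Q ^ 2) ^ (1 - t)) * ((P ^ 2) ^ (1 - t) * (Q ^ 2) ^ t) := by
          have e : ((P ^ 2) ^ t * (Q ^ 2) ^ (1 - t)) * ((P ^ 2) ^ (1 - t) * (Q ^ 2) ^ t)
              = ((P ^ 2) ^ t * (P ^ 2) ^ (1 - t)) * ((Q ^ 2) ^ (1 - t) * (Q ^ 2) ^ t) := by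
            ring
          rw [e, ← Real.rpow_add (by positivity), ← Real.rpow_add (by positivity)]
          norm_num
        have hnn1 : 0 ≤ (P ^ 2) ^ (1 - t) * (Q ^ 2) ^ t := by positivity
        have hnn2 : 0 ≤ t * P ^ 2 + (1 - t) * Q ^ 2 := by positivity
        calc P ^ 2 * Q ^ 2
            = ((P ^ 2) ^ t * (Q ^ 2) ^ (1 - t)) * ((P ^ 2) ^ (1 - t) * (Q ^ 2) ^ t) := hsplit
          _ ≤ (t * P ^ 2 + (1 - t) * Q ^ 2) * (‖A‖ ^ 2) := mul_le_mul g1 g2 hnn1 hnn2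
          _ ≤ ‖B‖ * ‖A‖ ^ 2 := by gcongr
          _ = ‖A‖ ^ 2 * ‖B‖ := mul_comm _ _
      -- now use sInf
      have hsmul := Real.sInf_smul_of_nonneg (by positivity : (0:ℝ) ≤ ‖A‖ ^ 2) S
      rw [smul_eq_mul] at hsmul
      rw [hm, ← hsmul]
      apply le_csInf (hSne.smul_set)
      rintro b ⟨s, hsS, rfl⟩
      simp only [smul_eq_mul]
      exact key_t s hsS
    -- combine
    have h1' : a ^ 2 ≤ (P * Q + r) / 2 := by rw [sq]; exact h1
    have hPQ0 : 0 ≤ P * Q := mul_nonneg (norm_nonneg _) (norm_nonneg _)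
    have ha2 : (a ^ 2) ^ 2 ≤ X / 4 := by
      have h5 : (a ^ 2) ^ 2 ≤ ((P * Q + r) / 2) ^ 2 := by
        apply pow_le_pow_left₀ (sq_nonneg _) h1'
      have e : ((P * Q + r) / 2) ^ 2 = (P ^ 2 * Q ^ 2 + (2 * (P * Q)) * r + r ^ 2) / 4 := by
        ring
      have b1 : (2 * (P * Q)) * r ≤ N * w2 := by
        apply mul_le_mul h3 h4 hr0 hN0
      have b2 : r ^ 2 ≤ w2 ^ 2 := pow_le_pow_left₀ hr0 h4 2
      rw [e] at h5
      rw [hXdef]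
      nlinarith
    have ha2' : a ^ 2 ≤ (1/2 : ℝ) * Real.sqrt X := by
      have hs := Real.sqrt_le_sqrt ha2
      rw [Real.sqrt_sq (sq_nonneg a)] at hs
      have he4 : Real.sqrt (X / 4) = (1/2 : ℝ) * Real.sqrt X := by
        rw [show X / 4 = (1/2 : ℝ)^2 * X by ring, Real.sqrt_mul (by positivity : (0:ℝ) ≤ (1/2:ℝ)^2),
          Real.sqrt_sq (by norm_num : (0:ℝ) ≤ (1/2:ℝ))]
      rw [he4] at hs
      exact hs
    rw [Real.le_sqrt ha0 (by positivity)]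
    exact ha2'
  -- conclude
  have h0 : 0 ≤ numRadius A := Real.sSup_nonneg (by rintro rr ⟨x, hx, rfl⟩; positivity)
  have hsup : numRadius A ≤ Real.sqrt ((1/2 : ℝ) * Real.sqrt X) := by
    rw [numRadius]
    apply Real.sSup_le _ (Real.sqrt_nonneg _)
    rintro rr ⟨x, hx, rfl⟩
    exact keyx x hx
  calc numRadius A ^ 2 ≤ Real.sqrt ((1/2 : ℝ) * Real.sqrt X) ^ 2 := by
        apply pow_le_pow_left₀ h0 hsup
    _ = (1/2 : ℝ) * Real.sqrt X := Real.sq_sqrt (by positivity)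
end
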